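/- Expected number of Γ-bearers given the criminal bears Γ: under the classical island model, E[U | Γ_C = 1] = 1 + Np, and consequently the posterior probability of guilt satisfies P(C=s | S=s, Γ_C=1, Γ_s=1) = 1 / E[U | Γ_C = 1]. -/

import Mathlib

open MeasureTheory ProbabilityTheory
open scoped ENNReal

/-- `E[U | Γ_C = 1] = 1 + N p`, and the posterior probability of guilt is its inverse. -/
theorem island_expected_bearers_given_I
    {Ω : Type*} [MeasurableSpace Ω] (μ : Measure Ω) [IsProbabilityMeasure μ]
    {X : Type*} [Fintype X] [MeasurableSpace X] [MeasurableSingletonClass X]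
    (N : ℕ) (hX : Fintype.card X = N + 1)
    (C S : Ω → X) (hC : Measurable C) (hS : Measurable S)
    (Γ : X → Ω → Bool) (hΓ : ∀ x, Measurable (Γ x))
    (p : ℝ≥0∞) (hp0 : p ≠ 0) (hp1 : p ≤ 1)
    (hCunif : ∀ x : X, μ {ω | C ω = x} = 1 / (N + 1))
    (hCS : IndepFun C S μ)
    (hiid : iIndepFun Γ μ)
    (hBer : ∀ x, μ {ω | Γ x ω = true} = p)
    (hind : IndepFun (fun ω => (C ω, S ω)) (fun ω x => Γ x ω) μ)
    (U : Ω → ℕ) (hU : ∀ ω, U ω = ∑ x : X, if Γ x ω then 1 else 0)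
    (s : X)
    (hpos : μ ({ω | S ω = s} ∩ {ω | Γ (C ω) ω = true} ∩ {ω | Γ s ω = true}) ≠ 0) :
    (∫⁻ ω, (U ω : ℝ≥0∞) ∂(μ[|{ω | Γ (C ω) ω = true}])) = 1 + N * p ∧
    μ[|{ω | S ω = s} ∩ {ω | Γ (C ω) ω = true} ∩ {ω | Γ s ω = true}] {ω | C ω = s}
      = (∫⁻ ω, (U ω : ℝ≥0∞) ∂(μ[|{ω | Γ (C ω) ω = true}]))⁻¹ := by
  classical
  set G : Ω → X → Bool := fun ω x => Γ x ω with hGdef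
  -- basic measurability facts
  have hax : ∀ x : X, MeasurableSet {ω | Γ x ω = true} := by
    intro x; exact (hΓ x) (measurableSet_singleton true)
  have hCx : ∀ x : X, MeasurableSet {ω | C ω = x} := by
    intro x; exact hC (measurableSet_singleton x)
  have hSs : MeasurableSet {ω | S ω = s} := by
    exact hS (measurableSet_singleton s)
  have hEx : ∀ x : X, MeasurableSet {f : X → Bool | f x = true} := by
    intro x
    exact (measurable_pi_apply (X := fun _ : X => Bool) x) (measurableSet_singleton true)
  -- independence consequences
  have key1 : ∀ (x : X) (E : Set (X → Bool)), MeasurableSet E →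
      μ ({ω | C ω = x} ∩ G ⁻¹' E) = μ {ω | C ω = x} * μ (G ⁻¹' E) := by
    intro x E hE
    have h := hind.measure_inter_preimage_eq_mul _ _
      ((measurableSet_singleton x).prod MeasurableSet.univ) hE
    have hpre : (fun ω => (C ω, S ω)) ⁻¹' (({x} : Set X) ×ˢ Set.univ) = {ω | C ω = x} := by
      ext ω; simp [eq_comm]
    rwa [hpre] at h
  have key2 : ∀ (x y : X) (E : Set (X → Bool)), MeasurableSet E →
      μ ({ω | C ω = x ∧ S ω = y} ∩ G ⁻¹' E) = μ {ω | C ω = x ∧ S ω = y} * μ (G ⁻¹' E) := by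
    intro x y E hE
    have h := hind.measure_inter_preimage_eq_mul _ _
      ((measurableSet_singleton x).prod (measurableSet_singleton y)) hE
    have hpre : (fun ω => (C ω, S ω)) ⁻¹' (({x} : Set X) ×ˢ ({y} : Set X))
        = {ω | C ω = x ∧ S ω = y} := by ext ω; simp [eq_comm]
    rwa [hpre] at h
  have hone : ∀ y : X, G ⁻¹' {f : X → Bool | f y = true} = {ω | Γ y ω = true} := fun y => rfl
  have htwo : ∀ y z : X, G ⁻¹' ({f : X → Bool | f y = true} ∩ {f | f z = true})
      = {ω | Γ y ω = true} ∩ {ω | Γ z ω = true} := fun y z => rfl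
  have haa : ∀ y z : X, μ ({ω | Γ y ω = true} ∩ {ω | Γ z ω = true})
      = if y = z then p else p * p := by
    intro y z
    by_cases h : y = z
    · simp [h, hBer]
    · have h2 := (hiid.indepFun h).measure_inter_preimage_eq_mul _ _
        (measurableSet_singleton true) (measurableSet_singleton true)
      simp only [if_neg h]
      have e1 : Γ y ⁻¹' {true} = {ω | Γ y ω = true} := rfl
      have e2 : Γ z ⁻¹' {true} = {ω | Γ z ω = true} := rfl
      rw [e1, e2] at h2
      rw [h2, hBer, hBer]
  -- arithmetic preliminaries
  have hptop : p ≠ ⊤ := (hp1.trans_lt ENNReal.one_lt_top).ne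
  have hNne : ((N : ℝ≥0∞) + 1) ≠ 0 := by simp
  have hNtop : ((N : ℝ≥0∞) + 1) ≠ ⊤ := by
    simp [ENNReal.add_eq_top]
  have hNinv : ((N : ℝ≥0∞) + 1) * ((N : ℝ≥0∞) + 1)⁻¹ = 1 :=
    ENNReal.mul_inv_cancel hNne hNtop
  have hCunif' : ∀ x : X, μ {ω | C ω = x} = ((N : ℝ≥0∞) + 1)⁻¹ := by
    intro x; rw [hCunif x, one_div]
  -- partition over the value of C
  have hpart : ∀ (T : X → Set Ω), (∀ x, MeasurableSet (T x)) →
      μ (⋃ x, ({ω | C ω = x} ∩ T x)) = ∑ x : X, μ ({ω | C ω = x} ∩ T x) := by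
    intro T hT
    rw [measure_iUnion ?_ (fun x => (hCx x).inter (hT x)), tsum_fintype]
    intro i j hij
    refine Set.disjoint_left.mpr ?_
    rintro ω ⟨hi, -⟩ ⟨hj, -⟩
    exact hij (hi.symm.trans hj)
  -- the if-sum
  have hsumif : ∀ y : X, (∑ x : X, if x = y then p else p * p)
      = p + (N : ℝ≥0∞) * (p * p) := by
    intro y
    rw [← Finset.add_sum_erase _ _ (Finset.mem_univ y), if_pos rfl]
    congr 1
    rw [Finset.sum_congr rfl (fun x hx => if_neg (Finset.ne_of_mem_erase hx)),
      Finset.sum_const, Finset.card_erase_of_mem (Finset.mem_univ y), Finset.card_univ, hX,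
      Nat.add_sub_cancel, nsmul_eq_mul]
  -- decomposition of the event A = {Γ_C = 1}
  have hAeq : {ω | Γ (C ω) ω = true}
      = ⋃ x, ({ω | C ω = x} ∩ {ω | Γ x ω = true}) := by
    ext ω
    simp only [Set.mem_iUnion, Set.mem_inter_iff, Set.mem_setOf_eq]
    exact ⟨fun h => ⟨C ω, rfl, h⟩, fun ⟨x, hx, h⟩ => hx ▸ h⟩
  have hAm : MeasurableSet {ω | Γ (C ω) ω = true} := by
    rw [hAeq]; exact MeasurableSet.iUnion fun x => (hCx x).inter (hax x)
  -- measure of A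
  have hmuA : μ {ω | Γ (C ω) ω = true} = p := by
    rw [hAeq, hpart _ hax]
    have : ∀ x : X, μ ({ω | C ω = x} ∩ {ω | Γ x ω = true}) = ((N : ℝ≥0∞) + 1)⁻¹ * p := by
      intro x
      have h := key1 x _ (hEx x)
      rw [hone] at h
      rw [h, hCunif' x, hBer]
    rw [Finset.sum_congr rfl (fun x _ => this x), Finset.sum_const, Finset.card_univ, hX,
      nsmul_eq_mul]
    push_cast
    rw [← mul_assoc, hNinv, one_mul]
  -- measure of A ∩ {Γ_y = 1}
  have hmuAy : ∀ y : X, μ ({ω | Γ y ω = true} ∩ {ω | Γ (C ω) ω = true})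
      = ((N : ℝ≥0∞) + 1)⁻¹ * (p + (N : ℝ≥0∞) * (p * p)) := by
    intro y
    have hdec : {ω | Γ y ω = true} ∩ {ω | Γ (C ω) ω = true}
        = ⋃ x, ({ω | C ω = x} ∩ ({ω | Γ x ω = true} ∩ {ω | Γ y ω = true})) := by
      rw [hAeq, Set.inter_iUnion]
      refine Set.iUnion_congr fun x => ?_
      ext ω
      simp only [Set.mem_inter_iff, Set.mem_setOf_eq]
      tauto
    rw [hdec, hpart _ (fun x => (hax x).inter (hax y))]
    have : ∀ x : X, μ ({ω | C ω = x} ∩ ({ω | Γ x ω = true} ∩ {ω | Γ y ω = true}))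
        = ((N : ℝ≥0∞) + 1)⁻¹ * (if x = y then p else p * p) := by
      intro x
      have h := key1 x _ ((hEx x).inter (hEx y))
      rw [htwo] at h
      rw [h, hCunif' x, haa]
    rw [Finset.sum_congr rfl (fun x _ => this x), ← Finset.mul_sum, hsumif]
  -- Part 1 : conditional expectation of U
  have hpart1 : (∫⁻ ω, (U ω : ℝ≥0∞) ∂(μ[|{ω | Γ (C ω) ω = true}])) = 1 + N * p := by
    have hrw : ∀ ω, ((U ω : ℝ≥0∞))
        = ∑ x : X, Set.indicator {ω' | Γ x ω' = true} (1 : Ω → ℝ≥0∞) ω := by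
      intro ω
      rw [hU ω]
      push_cast
      refine Finset.sum_congr rfl fun x _ => ?_
      by_cases h : Γ x ω = true <;> simp [Set.indicator, h]
    rw [ProbabilityTheory.cond, lintegral_smul_measure, lintegral_congr hrw,
      lintegral_finset_sum (f := fun (x : X) ω => Set.indicator {ω' | Γ x ω' = true} (1 : Ω → ℝ≥0∞) ω)
        Finset.univ (fun x _ => measurable_const.indicator (hax x))]
    have hterm : ∀ x : X, (∫⁻ ω, Set.indicator {ω' | Γ x ω' = true} (1 : Ω → ℝ≥0∞) ω
        ∂(μ.restrict {ω | Γ (C ω) ω = true}))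
        = ((N : ℝ≥0∞) + 1)⁻¹ * (p + (N : ℝ≥0∞) * (p * p)) := by
      intro x
      rw [lintegral_indicator_one (hax x), Measure.restrict_apply (hax x), hmuAy x]
    rw [Finset.sum_congr rfl (fun x _ => hterm x), Finset.sum_const, Finset.card_univ, hX,
      nsmul_eq_mul, hmuA]
    push_cast
    rw [← mul_assoc ((N : ℝ≥0∞) + 1), hNinv, one_mul]
    have hq : p + (N : ℝ≥0∞) * (p * p) = p * (1 + (N : ℝ≥0∞) * p) := by ring
    rw [hq, smul_eq_mul, ← mul_assoc, ENNReal.inv_mul_cancel hp0 hptop, one_mul]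
  refine ⟨hpart1, ?_⟩
  -- Part 2 : the posterior probability
  rw [hpart1]
  have hBm : MeasurableSet ({ω | S ω = s} ∩ {ω | Γ (C ω) ω = true} ∩ {ω | Γ s ω = true}) :=
    (hSs.inter hAm).inter (hax s)
  rw [cond_apply hBm]
  -- μ (C = x ∧ S = s)
  have hxs : ∀ x : X, μ {ω | C ω = x ∧ S ω = s}
      = ((N : ℝ≥0∞) + 1)⁻¹ * μ {ω | S ω = s} := by
    intro x
    have h := hCS.measure_inter_preimage_eq_mul _ _
      (measurableSet_singleton x) (measurableSet_singleton s)
    have e1 : C ⁻¹' {x} ∩ S ⁻¹' {s} = {ω | C ω = x ∧ S ω = s} := by ext ω; simp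
    have e2 : C ⁻¹' {x} = {ω | C ω = x} := rfl
    have e3 : S ⁻¹' {s} = {ω | S ω = s} := rfl
    rw [e1, e2, e3] at h
    rw [h, hCunif' x]
  -- μ (B ∩ {C = s})
  have hBC : ({ω | S ω = s} ∩ {ω | Γ (C ω) ω = true} ∩ {ω | Γ s ω = true}) ∩ {ω | C ω = s}
      = {ω | C ω = s ∧ S ω = s} ∩ {ω | Γ s ω = true} := by
    ext ω
    simp only [Set.mem_inter_iff, Set.mem_setOf_eq]
    constructor
    · rintro ⟨⟨⟨h1, h2⟩, h3⟩, h4⟩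
      exact ⟨⟨h4, h1⟩, h3⟩
    · rintro ⟨⟨h1, h2⟩, h3⟩
      exact ⟨⟨⟨h2, by rw [h1]; exact h3⟩, h3⟩, h1⟩
  have hmuBC : μ (({ω | S ω = s} ∩ {ω | Γ (C ω) ω = true} ∩ {ω | Γ s ω = true}) ∩ {ω | C ω = s})
      = ((N : ℝ≥0∞) + 1)⁻¹ * μ {ω | S ω = s} * p := by
    rw [hBC]
    have h := key2 s s _ (hEx s)
    rw [hone] at h
    rw [h, hBer, hxs s]
  -- μ B
  have hBeq : {ω | S ω = s} ∩ {ω | Γ (C ω) ω = true} ∩ {ω | Γ s ω = true}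
      = ⋃ x, ({ω | C ω = x} ∩ ({ω | S ω = s} ∩ ({ω | Γ x ω = true} ∩ {ω | Γ s ω = true}))) := by
    ext ω
    simp only [Set.mem_iUnion, Set.mem_inter_iff, Set.mem_setOf_eq]
    constructor
    · rintro ⟨⟨h1, h2⟩, h3⟩
      exact ⟨C ω, rfl, h1, h2, h3⟩
    · rintro ⟨x, hx, h1, h2, h3⟩
      exact ⟨⟨h1, hx ▸ h2⟩, h3⟩
  have hmuB : μ ({ω | S ω = s} ∩ {ω | Γ (C ω) ω = true} ∩ {ω | Γ s ω = true})
      = (((N : ℝ≥0∞) + 1)⁻¹ * μ {ω | S ω = s} * p) * (1 + (N : ℝ≥0∞) * p) := by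
    rw [hBeq, hpart _ (fun x => hSs.inter ((hax x).inter (hax s)))]
    have hterm : ∀ x : X,
        μ ({ω | C ω = x} ∩ ({ω | S ω = s} ∩ ({ω | Γ x ω = true} ∩ {ω | Γ s ω = true})))
        = (((N : ℝ≥0∞) + 1)⁻¹ * μ {ω | S ω = s}) * (if x = s then p else p * p) := by
      intro x
      have hre : {ω | C ω = x} ∩ ({ω | S ω = s} ∩ ({ω | Γ x ω = true} ∩ {ω | Γ s ω = true}))
          = {ω | C ω = x ∧ S ω = s} ∩ ({ω | Γ x ω = true} ∩ {ω | Γ s ω = true}) := by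
        ext ω
        simp only [Set.mem_inter_iff, Set.mem_setOf_eq]
        tauto
      have h := key2 x s _ ((hEx x).inter (hEx s))
      rw [htwo] at h
      rw [hre, h, hxs x, haa]
    rw [Finset.sum_congr rfl (fun x _ => hterm x), ← Finset.mul_sum, hsumif]
    have : p + (N : ℝ≥0∞) * (p * p) = p * (1 + (N : ℝ≥0∞) * p) := by ring
    rw [this]
    ring
  -- final computation
  rw [hmuBC, hmuB]
  set k := ((N : ℝ≥0∞) + 1)⁻¹ * μ {ω | S ω = s} * p with hk
  set z := (1 : ℝ≥0∞) + (N : ℝ≥0∞) * p with hz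
  have hk0 : k ≠ 0 := by
    intro h
    exact hpos (by rw [hmuB, h, zero_mul])
  have hktop : k ≠ ⊤ := by
    apply ENNReal.mul_ne_top
    apply ENNReal.mul_ne_top
    · exact ENNReal.inv_ne_top.mpr hNne
    · exact measure_ne_top μ _
    · exact hptop
  rw [ENNReal.mul_inv (Or.inl hk0) (Or.inl hktop), mul_comm k⁻¹ z⁻¹, mul_assoc,
    ENNReal.inv_mul_cancel hk0 hktop, mul_one]
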